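/- arXiv:1808.00227 — 2 statements merged into one kernel-verified Lean document; each statement's English description precedes it below -/
import Mathlib

section
/- For every complex number q with 0 < |q| < 1, | Σ_{m≥1} q^m / (m(1 − q^m)) | ≤ Σ_{m≥1} |q|^m / (m(1 − |q|^m)) − |q| ( 1/(1 − |q|) − 1/|1 − q| ). Equivalently, |Log(1/(q;q)_∞)| ≤ Log(1/(|q|;|q|)_∞) − |q|( 1/(1−|q|) − 1/|1−q| ). -/
set_option maxHeartbeats 1000000


open Finset Real Complex

theorem log_eulerProd_inv_bound (q : ℂ) (hq0 : 0 < ‖q‖)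
    (hq1 : ‖q‖ < 1) :
    ‖∑' m : ℕ, q ^ (m + 1) / ((m + 1 : ℕ) * (1 - q ^ (m + 1)))‖ ≤
      (∑' m : ℕ, ‖q‖ ^ (m + 1) / ((m + 1) * (1 - ‖q‖ ^ (m + 1)))) -
        ‖q‖ * (1 / (1 - ‖q‖) - 1 / ‖1 - q‖) := by
  set r := ‖q‖ with hr
  have hr0 : 0 < r := hq0
  have hr1 : r < 1 := hq1
  set a : ℕ → ℂ := fun m => q ^ (m + 1) / ((m + 1 : ℕ) * (1 - q ^ (m + 1))) with ha
  set b : ℕ → ℝ := fun m => r ^ (m + 1) / ((m + 1) * (1 - r ^ (m + 1))) with hb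
  have hpow : ∀ m : ℕ, r ^ (m + 1) < 1 := fun m =>
    pow_lt_one₀ hr0.le hr1 (Nat.succ_ne_zero m)
  have hden : ∀ m : ℕ, 0 < 1 - r ^ (m + 1) := fun m => by linarith [hpow m]
  have habs_pow : ∀ m : ℕ, ‖q ^ (m + 1)‖ = r ^ (m + 1) := fun m => by
    simp [norm_pow, hr]
  have hlow : ∀ m : ℕ, 1 - r ^ (m + 1) ≤ ‖1 - q ^ (m + 1)‖ := fun m => by
    have h := norm_sub_norm_le (1 : ℂ) (q ^ (m + 1))
    simpa [habs_pow m] using h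
  have hden' : ∀ m : ℕ, 0 < ‖1 - q ^ (m + 1)‖ := fun m =>
    lt_of_lt_of_le (hden m) (hlow m)
  have hbpos : ∀ m : ℕ, 0 < b m := fun m =>
    div_pos (pow_pos hr0 _) (mul_pos (by positivity) (hden m))
  have habs : ∀ m : ℕ, ‖a m‖ = r ^ (m + 1) / ((m + 1) * ‖1 - q ^ (m + 1)‖) := by
    intro m
    rw [ha]
    simp only [norm_div, norm_mul, norm_pow, Complex.norm_natCast]
    push_cast
    ring
  have hle : ∀ m : ℕ, ‖a m‖ ≤ b m := by
    intro m
    rw [habs m, hb]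
    apply div_le_div_of_nonneg_left (by positivity) (mul_pos (by positivity) (hden m))
    have h0 : (0:ℝ) < (m:ℝ) + 1 := by positivity
    exact mul_le_mul_of_nonneg_left (hlow m) h0.le
  have hmaj : Summable (fun m : ℕ => r ^ (m + 1) / (1 - r)) := by
    simp_rw [pow_succ, div_eq_mul_inv]
    exact ((summable_geometric_of_lt_one hr0.le hr1).mul_right _).mul_right _
  have hble : ∀ m : ℕ, b m ≤ r ^ (m + 1) / (1 - r) := by
    intro m
    rw [hb]
    have h1 : (1:ℝ) ≤ (m:ℝ) + 1 := by linarith [(m.cast_nonneg : (0:ℝ) ≤ m)]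
    have h2 : 1 - r ≤ 1 - r ^ (m + 1) := by
      have : r ^ (m + 1) ≤ r := pow_le_of_le_one hr0.le hr1.le (Nat.succ_ne_zero m)
      linarith
    have h3 : 1 - r ≤ ((m:ℝ) + 1) * (1 - r ^ (m + 1)) :=
      calc 1 - r = 1 * (1 - r) := (one_mul _).symm
        _ ≤ ((m:ℝ) + 1) * (1 - r ^ (m + 1)) :=
          mul_le_mul h1 h2 (by linarith) (by positivity)
    exact div_le_div_of_nonneg_left (by positivity) (by linarith) h3
  have hsumb : Summable b :=
    hmaj.of_nonneg_of_le (fun m => (hbpos m).le) hble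
  have hsuma : Summable fun m => ‖a m‖ :=
    Summable.of_nonneg_of_le (fun m => (norm_nonneg _)) hle hsumb
  have hsuma' : Summable a := by
    rw [← summable_norm_iff]
    simpa using hsuma
  -- the correction term equals b 0 - |a 0|
  have hq1ne : ‖1 - q‖ ≠ 0 := by
    have := hden' 0
    simpa using this.ne'
  have hc : r * (1 / (1 - r) - 1 / ‖1 - q‖) = b 0 - ‖a 0‖ := by
    rw [hb, habs 0]
    simp only [pow_one, Nat.cast_zero]
    field_simp
    have h1r : (1:ℝ) - r ≠ 0 := by linarith
    simp only [zero_add, pow_one, mul_one]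
    field_simp
  have key : b 0 - ‖a 0‖ ≤ ∑' m, (b m - ‖a m‖) := by
    apply Summable.le_tsum (hsumb.sub hsuma) 0
    intro j _
    linarith [hle j]
  have h1 : ‖∑' m, a m‖ ≤ ∑' m, ‖a m‖ := by
    have hn : Summable fun m => ‖a m‖ := by simpa using hsuma
    simpa using norm_tsum_le_tsum_norm hn
  rw [Summable.tsum_sub hsumb hsuma] at key
  rw [hc]
  linarith
end

section
/- For all positive integers n and k, M_k(n) ≥ 0. -/
open Finset

/-- The number of partitions of `m`. -/
noncomputable def partitionCount (m : ℕ) : ℕ := Nat.card (Nat.Partition m)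

/-- The partition function extended to integers, `p(m) = 0` for `m < 0`. -/
noncomputable def pZ (m : ℤ) : ℤ := if 0 ≤ m then (partitionCount m.toNat : ℤ) else 0

/-- The Andrews–Merca function `M_k(n)`. -/
noncomputable def andrewsMercaM (k : ℕ) (n : ℤ) : ℤ :=
  (-1) ^ (k - 1) * ∑ j ∈ Finset.range k,
    (-1) ^ j * (pZ (n - (j : ℤ) * (3 * j + 1) / 2) - pZ (n - (j : ℤ) * (3 * j + 5) / 2 - 1))

namespace AMtmp

/-- generalized pentagonal-type numbers: `pent j = j(3j+1)/2`. -/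
def pent (j : ℤ) : ℤ := j * (3 * j + 1) / 2

lemma pent_dvd (j : ℤ) : 2 ∣ j * (3 * j + 1) := by
  rcases Int.even_or_odd j with ⟨a, ha⟩ | ⟨a, ha⟩
  · exact ⟨a * (3 * j + 1), by rw [ha]; ring⟩
  · exact ⟨j * (3 * a + 2), by rw [ha]; ring⟩

lemma two_pent (j : ℤ) : 2 * pent j = j * (3 * j + 1) :=
  Int.mul_ediv_cancel' (pent_dvd j)

lemma pent_succ (j : ℤ) : pent (j + 1) = pent j + (3 * j + 2) := by
  have h1 := two_pent (j + 1)
  have h2 := two_pent j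
  have h3 : (j+1) * (3*(j+1)+1) = j*(3*j+1) + 2*(3*j+2) := by ring
  omega

lemma pent_pred (j : ℤ) : pent (j - 1) = pent j - (3 * j - 1) := by
  have := pent_succ (j - 1); have h : j - 1 + 1 = j := by ring
  rw [h] at this; omega

lemma pent_zero : pent 0 = 0 := rfl

/-- second pentagonal family as used in `andrewsMercaM`. -/
lemma pent_neg_succ (j : ℕ) : pent (-1 - (j:ℤ)) = (j : ℤ) * (3 * j + 5) / 2 + 1 := by
  have h1 := two_pent (-1 - (j:ℤ))
  have hd : (2:ℤ) ∣ (j:ℤ) * (3 * j + 5) := by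
    obtain ⟨a, ha⟩ := pent_dvd (j:ℤ)
    exact ⟨a + 2 * j, by rw [mul_comm (2:ℤ)] at ha ⊢; nlinarith [ha]⟩
  have h2 : 2 * ((j:ℤ) * (3 * j + 5) / 2) = (j:ℤ) * (3 * j + 5) :=
    Int.mul_ediv_cancel' hd
  have h3 : (-1 - (j:ℤ)) * (3*(-1 - (j:ℤ))+1) = (j:ℤ) * (3 * j + 5) + 2 := by ring
  omega

/-- pent (-k) - pent (k-1) = 2k - 1 -/
lemma pent_neg_sub (k : ℤ) : pent (-k) = pent (k - 1) + (2 * k - 1) := by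
  have h1 := two_pent (-k)
  have h2 := two_pent (k - 1)
  have h3 : (-k) * (3*(-k)+1) = (k-1) * (3*(k-1)+1) + 2*(2*k-1) := by ring
  omega

/-- The finset of partitions (as multisets) of an integer `N`. -/
noncomputable def parts (N : ℤ) : Finset (Multiset ℕ) :=
  if h : 0 ≤ N then (Finset.univ : Finset (Nat.Partition N.toNat)).image (fun p => p.parts)
  else ∅

lemma mem_parts {N : ℤ} {s : Multiset ℕ} :
    s ∈ parts N ↔ ((s.sum : ℤ) = N ∧ ∀ x ∈ s, x ≠ 0) := by
  unfold parts
  split_ifs with h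
  · simp only [Finset.mem_image, Finset.mem_univ, true_and]
    constructor
    · rintro ⟨p, rfl⟩
      refine ⟨?_, fun x hx => (p.parts_pos hx).ne'⟩
      rw [p.parts_sum, Int.toNat_of_nonneg h]
    · rintro ⟨hsum, hpos⟩
      refine ⟨⟨s, fun {x} hx => Nat.pos_of_ne_zero (hpos x hx), ?_⟩, rfl⟩
      omega
  · simp only [Finset.notMem_empty, false_iff, not_and]
    intro hsum
    exfalso; have : (0:ℤ) ≤ s.sum := Int.natCast_nonneg _
    omega

lemma card_parts (N : ℤ) : ((parts N).card : ℤ) = pZ N := by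
  unfold parts pZ
  split_ifs with h
  · rw [Finset.card_image_of_injective _ (fun p q hpq => Nat.Partition.ext hpq),
      Finset.card_univ, partitionCount, Nat.card_eq_fintype_card]
  · simp


lemma sup_mem {s : Multiset ℕ} (h : s ≠ 0) : s.sup ∈ s := by
  induction s using Multiset.induction with
  | empty => simp at h
  | cons a t ih =>
    rw [Multiset.sup_cons]
    rcases eq_or_ne t 0 with rfl | ht
    · simp
    · rcases le_total a t.sup with h1 | h1
      · rw [max_eq_right h1]
        exact Multiset.mem_cons_of_mem (ih ht)
      · rw [max_eq_left h1]; exact Multiset.mem_cons_self a t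

lemma le_sup_of_mem {s : Multiset ℕ} {x : ℕ} (h : x ∈ s) : x ≤ s.sup :=
  Multiset.le_sup h

/-- conjugate (transpose) of a partition given as a multiset -/
def conj (s : Multiset ℕ) : Multiset ℕ :=
  (Multiset.range s.sup).map (fun i => (s.filter (fun x => i < x)).card)

lemma conj_zero : conj 0 = 0 := rfl

lemma card_conj (s : Multiset ℕ) : Multiset.card (conj s) = s.sup := by
  simp [conj]

lemma range_map_sum (f : ℕ → ℕ) (L : ℕ) :
    ((Multiset.range L).map f).sum = ∑ i ∈ Finset.range L, f i := rfl

lemma sum_filter_lt (s : Multiset ℕ) (L : ℕ) :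
    ∑ i ∈ Finset.range L, (s.filter (fun x => i < x)).card
      = (s.map (fun x => min x L)).sum := by
  induction s using Multiset.induction with
  | empty => simp
  | cons a t ih =>
    simp only [Multiset.filter_cons, Multiset.card_add, Multiset.map_cons, Multiset.sum_cons]
    rw [Finset.sum_add_distrib, ih]
    have : ∑ i ∈ Finset.range L, Multiset.card (if i < a then ({a} : Multiset ℕ) else 0)
        = ∑ i ∈ Finset.range L, (if i < a then 1 else 0) := by
      apply Finset.sum_congr rfl; intro i _; split <;> simp
    rw [this, Finset.sum_boole]
    have : Finset.filter (fun i => i < a) (Finset.range L) = Finset.range (min a L) := by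
      ext i; simp [Finset.mem_filter, Finset.mem_range]; omega
    rw [this]
    simp [Nat.min_comm]

lemma sum_conj {s : Multiset ℕ} : (conj s).sum = s.sum := by
  rw [conj, range_map_sum, sum_filter_lt]
  have : s.map (fun x => min x s.sup) = s.map id := by
    apply Multiset.map_congr rfl
    intro x hx; simp [min_eq_left (le_sup_of_mem hx)]
  rw [this, Multiset.map_id]

lemma conj_pos {s : Multiset ℕ} (hs : ∀ x ∈ s, x ≠ 0) : ∀ x ∈ conj s, x ≠ 0 := by
  intro x hx
  rw [conj, Multiset.mem_map] at hx
  obtain ⟨i, hi, rfl⟩ := hx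
  rw [Multiset.mem_range] at hi
  have hne : s ≠ 0 := by
    rintro rfl; simp at hi
  have : s.sup ∈ s.filter (fun x => i < x) :=
    Multiset.mem_filter.2 ⟨sup_mem hne, hi⟩
  intro hc
  rw [Multiset.card_eq_zero] at hc
  rw [hc] at this; simp at this

lemma sup_conj {s : Multiset ℕ} (hs : ∀ x ∈ s, x ≠ 0) :
    (conj s).sup = Multiset.card s := by
  rcases eq_or_ne s 0 with rfl | hne
  · simp [conj_zero]
  · apply le_antisymm
    · rw [Multiset.sup_le]
      intro b hb
      rw [conj, Multiset.mem_map] at hb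
      obtain ⟨i, _, rfl⟩ := hb
      exact Multiset.card_le_card (Multiset.filter_le _ s)
    · have h0 : (0:ℕ) ∈ Multiset.range s.sup := by
        rw [Multiset.mem_range]
        have := sup_mem hne
        have := hs _ this
        omega
      have : Multiset.card s = (s.filter (fun x => 0 < x)).card := by
        congr 1
        symm
        rw [Multiset.filter_eq_self]
        intro x hx; exact Nat.pos_of_ne_zero (hs x hx)
      rw [this]
      exact Multiset.le_sup (Multiset.mem_map_of_mem _ h0)


-- new content
lemma range_succ' (n : ℕ) :
    Multiset.range (n+1) = 0 ::ₘ (Multiset.range n).map (fun i => i + 1) := by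
  show ((List.range (n+1) : List ℕ) : Multiset ℕ) = _
  rw [List.range_succ_eq_map]
  simp [Multiset.range]

lemma range_add' (a b : ℕ) :
    Multiset.range (a+b) = Multiset.range a + (Multiset.range b).map (fun i => a + i) := by
  show ((List.range (a+b) : List ℕ) : Multiset ℕ) = _
  rw [List.range_add]
  simp [Multiset.range]

lemma sup_map_succ {A : Multiset ℕ} (hA : A ≠ 0) :
    (A.map (fun x => x + 1)).sup = A.sup + 1 := by
  apply le_antisymm
  · rw [Multiset.sup_le]
    intro b hb
    rw [Multiset.mem_map] at hb
    obtain ⟨a, ha, rfl⟩ := hb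
    exact Nat.succ_le_succ (Multiset.le_sup ha)
  · exact Multiset.le_sup (Multiset.mem_map_of_mem _ (sup_mem hA))

lemma sup_replicate_one (t : ℕ) : (Multiset.replicate t 1).sup ≤ 1 := by
  rw [Multiset.sup_le]
  intro b hb
  rw [Multiset.eq_of_mem_replicate hb]

/-- Key lemma: conjugate of "shift right and add a first column". -/
lemma conj_shift {A : Multiset ℕ} (hA : ∀ x ∈ A, x ≠ 0) (t : ℕ)
    (hpos : A ≠ 0 ∨ 0 < t) :
    conj (A.map (fun x => x + 1) + Multiset.replicate t 1)
      = (Multiset.card A + t) ::ₘ conj A := by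
  rcases eq_or_ne A 0 with rfl | hne
  · -- A = 0, t > 0
    have ht : 0 < t := hpos.resolve_left (by simp)
    simp only [Multiset.map_zero, zero_add, Multiset.card_zero, conj_zero]
    have hsup : (Multiset.replicate t 1).sup = 1 := by
      apply le_antisymm (sup_replicate_one t)
      exact Multiset.le_sup (Multiset.mem_replicate.2 ⟨ht.ne', rfl⟩)
    rw [conj, hsup]
    have : Multiset.range 1 = {0} := rfl
    rw [this]
    simp only [Multiset.map_singleton]
    have : (Multiset.replicate t 1).filter (fun x => 0 < x) = Multiset.replicate t 1 := by
      rw [Multiset.filter_eq_self]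
      intro a ha; rw [Multiset.eq_of_mem_replicate ha]; norm_num
    rw [this, Multiset.card_replicate]
    rfl
  · set L := A.sup with hL
    set B := A.map (fun x => x + 1) + Multiset.replicate t 1 with hB
    have hsupB : B.sup = L + 1 := by
      rw [hB, Multiset.sup_add, sup_map_succ hne]
      have h1 : (Multiset.replicate t 1).sup ≤ L + 1 :=
        le_trans (sup_replicate_one t) (by omega)
      exact sup_eq_left.2 h1
    have hBpos : ∀ x ∈ B, 0 < x := by
      intro x hx
      rw [hB, Multiset.mem_add] at hx
      rcases hx with hx | hx
      · rw [Multiset.mem_map] at hx; obtain ⟨a, _, rfl⟩ := hx; omega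
      · rw [Multiset.eq_of_mem_replicate hx]; norm_num
    rw [conj, hsupB, range_succ', Multiset.map_cons, Multiset.map_map]
    congr 1
    · -- f 0 = card B = card A + t
      have : B.filter (fun x => 0 < x) = B := by
        rw [Multiset.filter_eq_self]; exact fun a ha => hBpos a ha
      rw [this, hB]
      simp
    · -- remaining entries
      rw [conj]
      apply Multiset.map_congr rfl
      intro i _
      simp only [Function.comp_apply]
      rw [hB, Multiset.filter_add, Multiset.card_add]
      have h2 : (Multiset.replicate t 1).filter (fun x => i + 1 < x) = 0 := by
        rw [Multiset.filter_eq_nil]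
        intro a ha; rw [Multiset.eq_of_mem_replicate ha]; omega
      rw [h2, Multiset.filter_map]
      have h3 : A.filter ((fun x => i + 1 < x) ∘ (fun x => x + 1)) = A.filter (fun x => i < x) := by
        apply Multiset.filter_congr
        intro x _; simp only [Function.comp_apply]; omega
      rw [h3]
      simp

lemma sup_erase_le {s : Multiset ℕ} : (s.erase s.sup).sup ≤ s.sup := by
  rw [Multiset.sup_le]
  exact fun b hb => Multiset.le_sup (Multiset.mem_of_mem_erase hb)

/-- decomposition of conj via removing the largest part -/
lemma conj_erase_sup {s : Multiset ℕ} (hs : ∀ x ∈ s, x ≠ 0) (hne : s ≠ 0) :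
    conj s = (conj (s.erase s.sup)).map (fun x => x + 1)
      + Multiset.replicate (s.sup - (s.erase s.sup).sup) 1 := by
  set L := s.sup with hL
  set e := s.erase s.sup with he
  set Le := e.sup with hLe
  have hLeL : Le ≤ L := sup_erase_le
  have hcons : L ::ₘ e = s := Multiset.cons_erase (sup_mem hne)
  have hstep : ∀ i < L, (s.filter (fun x => i < x)).card
      = (e.filter (fun x => i < x)).card + 1 := by
    intro i hi
    rw [← hcons, Multiset.filter_cons, if_pos hi, Multiset.card_add]
    simp [add_comm]
  have h1 : conj s = ((Multiset.range L).map (fun i => (e.filter (fun x => i < x)).card)).map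
      (fun x => x + 1) := by
    rw [conj, Multiset.map_map]
    apply Multiset.map_congr rfl
    intro i hi
    rw [Multiset.mem_range] at hi
    exact hstep i hi
  have h2 : (Multiset.range L).map (fun i => (e.filter (fun x => i < x)).card)
      = conj e + Multiset.replicate (L - Le) 0 := by
    have hr : Multiset.range L
        = Multiset.range Le + (Multiset.range (L - Le)).map (fun i => Le + i) := by
      rw [← range_add']; congr 1; omega
    rw [hr, Multiset.map_add]
    have e1 : (Multiset.range Le).map (fun i => (e.filter (fun x => i < x)).card) = conj e := rfl
    have e2 : ((Multiset.range (L - Le)).map (fun i => Le + i)).map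
        (fun i => (e.filter (fun x => i < x)).card) = Multiset.replicate (L - Le) 0 := by
      rw [Multiset.map_map, Multiset.eq_replicate]
      constructor
      · simp
      · intro b hb
        rw [Multiset.mem_map] at hb
        obtain ⟨i, _, rfl⟩ := hb
        simp only [Function.comp_apply]
        rw [Multiset.card_eq_zero, Multiset.filter_eq_nil]
        intro a ha
        have : a ≤ Le := Multiset.le_sup ha
        omega
    rw [e1, e2]
  rw [h1, h2, Multiset.map_add]
  congr 1
  rw [Multiset.eq_replicate]
  constructor
  · simp
  · intro b hb
    rw [Multiset.mem_map] at hb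
    obtain ⟨x, hx, rfl⟩ := hb
    rw [Multiset.eq_of_mem_replicate hx]

lemma conj_conj {s : Multiset ℕ} (hs : ∀ x ∈ s, x ≠ 0) : conj (conj s) = s := by
  suffices H : ∀ n (s : Multiset ℕ), Multiset.card s = n → (∀ x ∈ s, x ≠ 0) →
      conj (conj s) = s from H _ s rfl hs
  clear hs s
  intro n
  induction n using Nat.strong_induction_on with
  | _ n IH =>
    intro s hcard hs
    rcases eq_or_ne s 0 with rfl | hne
    · simp [conj_zero]
    · set L := s.sup with hL
      set e := s.erase s.sup with he
      have hmem : L ∈ s := sup_mem hne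
      have hepos : ∀ x ∈ e, x ≠ 0 := fun x hx => hs x (Multiset.mem_of_mem_erase hx)
      have h0 : 0 < n := hcard ▸ Multiset.card_pos.2 hne
      have hecard : Multiset.card e < n := by
        rw [he, Multiset.card_erase_of_mem hmem, hcard]
        exact Nat.pred_lt h0.ne'
    -- the decomposition
      have hLpos : 0 < L := by
        have := hs L hmem; omega
      have hIH : conj (conj e) = e := IH _ hecard e rfl hepos
      rw [conj_erase_sup hs hne, conj_shift (conj_pos hepos) _ ?_, card_conj, hIH]
      · have hLeL : e.sup ≤ L := sup_erase_le
        rw [show e.sup + (L - e.sup) = L by omega]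
        exact Multiset.cons_erase hmem
      · rcases eq_or_ne e 0 with he0 | hene
        · right
          have hse : (s.erase s.sup).sup = 0 := by
            rw [show s.erase s.sup = (0 : Multiset ℕ) from he0]; rfl
          omega
        · left
          intro hc
          have := card_conj e
          rw [hc] at this
          have hsupe : e.sup ∈ e := sup_mem hene
          have : e.sup = 0 := by simpa using this.symm
          exact hepos _ hsupe this

lemma conj_inj {s t : Multiset ℕ} (hs : ∀ x ∈ s, x ≠ 0) (ht : ∀ x ∈ t, x ≠ 0)
    (h : conj s = conj t) : s = t := by
  rw [← conj_conj hs, h, conj_conj ht]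


/-- rank of a partition -/
def rk (s : Multiset ℕ) : ℤ := (s.sup : ℤ) - Multiset.card s

lemma rk_zero : rk 0 = 0 := rfl

def Uop (j : ℤ) (s : Multiset ℕ) : Multiset ℕ :=
  if s = 0 then Multiset.replicate (-3*j-2).toNat 1
  else (s.erase s.sup).map (fun x => x + 1)
    + Multiset.replicate ((s.sup : ℤ) - Multiset.card s - 3*j - 1).toNat 1

def Dop (j : ℤ) (s : Multiset ℕ) : Multiset ℕ :=
  (s.filter (fun x => 2 ≤ x)).map (fun x => x - 1)
  + (if 0 < (Multiset.card s : ℤ) + 3*j - 1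
      then {((Multiset.card s : ℤ) + 3*j - 1).toNat} else 0)

lemma sum_map_pred' {A : Multiset ℕ} (h : ∀ x ∈ A, 1 ≤ x) :
    (A.map (fun x => x - 1)).sum + Multiset.card A = A.sum := by
  induction A using Multiset.induction with
  | empty => simp
  | cons a t ih =>
    have ha : 1 ≤ a := h a (Multiset.mem_cons_self a t)
    have iht := ih (fun x hx => h x (Multiset.mem_cons_of_mem hx))
    simp only [Multiset.map_cons, Multiset.sum_cons, Multiset.card_cons]
    omega

lemma sum_map_succ' (A : Multiset ℕ) :
    (A.map (fun x => x + 1)).sum = A.sum + Multiset.card A := by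
  induction A using Multiset.induction with
  | empty => simp
  | cons a t ih =>
    simp only [Multiset.map_cons, Multiset.sum_cons, Multiset.card_cons]
    omega

lemma erase_sup_sum {s : Multiset ℕ} (h : s ≠ 0) :
    s.sum = s.sup + (s.erase s.sup).sum := by
  conv_lhs => rw [← Multiset.cons_erase (sup_mem h)]
  rw [Multiset.sum_cons]

lemma erase_sup_card {s : Multiset ℕ} (h : s ≠ 0) :
    Multiset.card s = Multiset.card (s.erase s.sup) + 1 := by
  conv_lhs => rw [← Multiset.cons_erase (sup_mem h)]
  rw [Multiset.card_cons]

lemma sup_pos {s : Multiset ℕ} (hs : ∀ x ∈ s, x ≠ 0) (h : s ≠ 0) : 1 ≤ s.sup := by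
  have h1 := sup_mem h
  have := hs _ h1
  omega

lemma mem_erase_le_sup {s : Multiset ℕ} {a : ℕ} (ha : a ∈ s.erase s.sup) : a ≤ s.sup :=
  Multiset.le_sup (Multiset.mem_of_mem_erase ha)

section Uside
variable {j : ℤ} {s : Multiset ℕ}

lemma Uop_pos (hs : ∀ x ∈ s, x ≠ 0) : ∀ x ∈ Uop j s, x ≠ 0 := by
  intro x hx
  rw [Uop] at hx
  split_ifs at hx with h0
  · rw [Multiset.eq_of_mem_replicate hx]; norm_num
  · rw [Multiset.mem_add] at hx
    rcases hx with hx | hx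
    · rw [Multiset.mem_map] at hx; obtain ⟨a, _, rfl⟩ := hx; omega
    · rw [Multiset.eq_of_mem_replicate hx]; norm_num

lemma Uop_sum (hs : ∀ x ∈ s, x ≠ 0) (hU : 3*j < rk s) :
    ((Uop j s).sum : ℤ) = (s.sum : ℤ) - (3*j + 2) := by
  rcases eq_or_ne s 0 with h0 | h0
  · have hj : 3*j < 0 := by rw [h0, rk_zero] at hU; exact hU
    have h1 : (Uop j s).sum = (-3*j-2).toNat := by
      rw [Uop, if_pos h0, Multiset.sum_replicate, smul_eq_mul, mul_one]
    have h2 : ((-3*j-2).toNat : ℤ) = -3*j-2 := Int.toNat_of_nonneg (by omega)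
    have h3 : s.sum = 0 := by rw [h0]; rfl
    omega
  · have hc : 0 ≤ (s.sup : ℤ) - Multiset.card s - 3*j - 1 := by rw [rk] at hU; omega
    have h1 : (Uop j s).sum = ((s.erase s.sup).sum + Multiset.card (s.erase s.sup))
        + ((s.sup : ℤ) - Multiset.card s - 3*j - 1).toNat := by
      rw [Uop, if_neg h0, Multiset.sum_add, sum_map_succ', Multiset.sum_replicate,
        smul_eq_mul, mul_one]
    have h2 := erase_sup_sum h0
    have h3 := erase_sup_card h0
    have h4 : (((s.sup : ℤ) - Multiset.card s - 3*j - 1).toNat : ℤ)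
        = (s.sup : ℤ) - Multiset.card s - 3*j - 1 := Int.toNat_of_nonneg hc
    omega

lemma Uop_rk (hs : ∀ x ∈ s, x ≠ 0) (hU : 3*j < rk s) :
    rk (Uop j s) ≤ 3*(j+1) := by
  rcases eq_or_ne s 0 with h0 | h0
  · have hj : 3*j < 0 := by rw [h0, rk_zero] at hU; exact hU
    have h2 : ((-3*j-2).toNat : ℤ) = -3*j-2 := Int.toNat_of_nonneg (by omega)
    have hU0 : Uop j s = Multiset.replicate (-3*j-2).toNat 1 := by rw [Uop, if_pos h0]
    have hsup : (Uop j s).sup ≤ 1 := by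
      rw [hU0, Multiset.sup_le]
      intro b hb; rw [Multiset.eq_of_mem_replicate hb]
    have hcard : Multiset.card (Uop j s) = (-3*j-2).toNat := by
      rw [hU0, Multiset.card_replicate]
    rw [rk]
    omega
  · have hc : 0 ≤ (s.sup : ℤ) - Multiset.card s - 3*j - 1 := by rw [rk] at hU; omega
    have h4 : (((s.sup : ℤ) - Multiset.card s - 3*j - 1).toNat : ℤ)
        = (s.sup : ℤ) - Multiset.card s - 3*j - 1 := Int.toNat_of_nonneg hc
    have hsup : (Uop j s).sup ≤ s.sup + 1 := by
      rw [Uop, if_neg h0, Multiset.sup_le]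
      intro b hb
      rw [Multiset.mem_add] at hb
      rcases hb with hb | hb
      · rw [Multiset.mem_map] at hb
        obtain ⟨a, ha, rfl⟩ := hb
        have := mem_erase_le_sup ha
        omega
      · rw [Multiset.eq_of_mem_replicate hb]
        omega
    have hcard : Multiset.card (Uop j s) = Multiset.card (s.erase s.sup)
        + ((s.sup : ℤ) - Multiset.card s - 3*j - 1).toNat := by
      rw [Uop, if_neg h0, Multiset.card_add, Multiset.card_map, Multiset.card_replicate]
    have h3 := erase_sup_card h0
    rw [rk]
    omega

lemma Dop_Uop (hs : ∀ x ∈ s, x ≠ 0) (hU : 3*j < rk s) :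
    Dop (j+1) (Uop j s) = s := by
  rcases eq_or_ne s 0 with h0 | h0
  · have hj : 3*j < 0 := by rw [h0, rk_zero] at hU; exact hU
    have h2 : ((-3*j-2).toNat : ℤ) = -3*j-2 := Int.toNat_of_nonneg (by omega)
    have hU0 : Uop j s = Multiset.replicate (-3*j-2).toNat 1 := by rw [Uop, if_pos h0]
    rw [Dop, hU0]
    have hf : (Multiset.replicate (-3*j-2).toNat 1).filter (fun x => 2 ≤ x) = 0 := by
      rw [Multiset.filter_eq_nil]
      intro a ha; rw [Multiset.eq_of_mem_replicate ha]; omega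
    have hd : ¬ (0 < ((Multiset.card (Multiset.replicate (-3*j-2).toNat 1)) : ℤ) + 3*(j+1) - 1) := by
      rw [Multiset.card_replicate]
      omega
    rw [hf, if_neg hd, h0]
    simp
  · have hc : 0 ≤ (s.sup : ℤ) - Multiset.card s - 3*j - 1 := by rw [rk] at hU; omega
    have h4 : (((s.sup : ℤ) - Multiset.card s - 3*j - 1).toNat : ℤ)
        = (s.sup : ℤ) - Multiset.card s - 3*j - 1 := Int.toNat_of_nonneg hc
    have hepos : ∀ x ∈ s.erase s.sup, x ≠ 0 := fun x hx => hs x (Multiset.mem_of_mem_erase hx)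
    have hU0 : Uop j s = (s.erase s.sup).map (fun x => x + 1)
        + Multiset.replicate ((s.sup : ℤ) - Multiset.card s - 3*j - 1).toNat 1 := by
      rw [Uop, if_neg h0]
    have hf1 : ((s.erase s.sup).map (fun x => x + 1)).filter (fun x => 2 ≤ x)
        = (s.erase s.sup).map (fun x => x + 1) := by
      rw [Multiset.filter_eq_self]
      intro a ha; rw [Multiset.mem_map] at ha
      obtain ⟨b, hb, rfl⟩ := ha
      have := hepos b hb; omega
    have hf2 : (Multiset.replicate ((s.sup : ℤ) - Multiset.card s - 3*j - 1).toNat 1).filter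
        (fun x => 2 ≤ x) = 0 := by
      rw [Multiset.filter_eq_nil]
      intro a ha; rw [Multiset.eq_of_mem_replicate ha]; omega
    have hmapid : ((s.erase s.sup).map (fun x => x + 1)).map (fun x => x - 1) = s.erase s.sup := by
      rw [Multiset.map_map]
      rw [show ((fun x => x - 1) ∘ (fun x : ℕ => x + 1)) = fun x : ℕ => x from by funext x; simp]
      exact Multiset.map_id _
    have hcardB : (Multiset.card (Uop j s) : ℤ) = (s.sup : ℤ) - 3*j - 2 := by
      rw [hU0, Multiset.card_add, Multiset.card_map, Multiset.card_replicate]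
      have h3 := erase_sup_card h0
      push_cast
      omega
    have hd : (Multiset.card (Uop j s) : ℤ) + 3*(j+1) - 1 = s.sup := by rw [hcardB]; ring
    have hdpos : 0 < (Multiset.card (Uop j s) : ℤ) + 3*(j+1) - 1 := by
      rw [hd]; exact_mod_cast sup_pos hs h0
    rw [Dop, hd]
    conv_lhs => rw [hU0]
    rw [Multiset.filter_add, hf1, hf2, add_zero, hmapid, if_pos (hd ▸ hdpos)]
    rw [show ((s.sup : ℤ)).toNat = s.sup by simp]
    rw [add_comm, Multiset.singleton_add]
    exact Multiset.cons_erase (sup_mem h0)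

end Uside

-- D-side
section Dside
variable {j : ℤ} {s : Multiset ℕ}

/-- all-ones part of `s` -/
lemma ones_eq_replicate (hs : ∀ x ∈ s, x ≠ 0) :
    s.filter (fun x => ¬ 2 ≤ x)
      = Multiset.replicate (Multiset.card (s.filter (fun x => ¬ 2 ≤ x))) 1 := by
  rw [Multiset.eq_replicate]
  refine ⟨rfl, fun b hb => ?_⟩
  rw [Multiset.mem_filter] at hb
  have := hs b hb.1
  omega

lemma split_card (s : Multiset ℕ) :
    Multiset.card (s.filter (fun x => 2 ≤ x)) + Multiset.card (s.filter (fun x => ¬ 2 ≤ x))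
      = Multiset.card s := by
  rw [← Multiset.card_add, Multiset.filter_add_not]

lemma split_sum (s : Multiset ℕ) :
    (s.filter (fun x => 2 ≤ x)).sum + (s.filter (fun x => ¬ 2 ≤ x)).sum = s.sum := by
  rw [← Multiset.sum_add, Multiset.filter_add_not]

lemma dge (hs : ∀ x ∈ s, x ≠ 0) (hD : rk s ≤ 3*j) (hne : ¬(s = 0 ∧ j = 0)) :
    0 ≤ (Multiset.card s : ℤ) + 3*j - 1 := by
  rcases eq_or_ne s 0 with h0 | h0
  · have : (0:ℤ) ≤ 3*j := by rw [h0, rk_zero] at hD; exact hD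
    have : j ≠ 0 := fun hj => hne ⟨h0, hj⟩
    simp [h0]
    omega
  · have := sup_pos hs h0
    rw [rk] at hD
    omega

/-- in case d = 0, the partition is all ones -/
lemma d0_ones (hs : ∀ x ∈ s, x ≠ 0) (hD : rk s ≤ 3*j)
    (hd0 : (Multiset.card s : ℤ) + 3*j - 1 = 0) :
    s = Multiset.replicate (Multiset.card s) 1 := by
  rw [Multiset.eq_replicate]
  refine ⟨rfl, fun b hb => ?_⟩
  have hb1 := hs b hb
  have hb2 : b ≤ s.sup := Multiset.le_sup hb
  rw [rk] at hD
  omega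

lemma d0_A_empty (hs : ∀ x ∈ s, x ≠ 0) (hD : rk s ≤ 3*j)
    (hd0 : (Multiset.card s : ℤ) + 3*j - 1 = 0) :
    s.filter (fun x => 2 ≤ x) = 0 := by
  rw [Multiset.filter_eq_nil]
  intro a ha
  have hb2 : a ≤ s.sup := Multiset.le_sup ha
  rw [rk] at hD
  omega

lemma Dop_pos (hs : ∀ x ∈ s, x ≠ 0) : ∀ x ∈ Dop j s, x ≠ 0 := by
  intro x hx
  rw [Dop] at hx
  rw [Multiset.mem_add] at hx
  rcases hx with hx | hx
  · rw [Multiset.mem_map] at hx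
    obtain ⟨a, ha, rfl⟩ := hx
    rw [Multiset.mem_filter] at ha
    omega
  · split_ifs at hx with hd
    · rw [Multiset.mem_singleton] at hx
      subst hx
      omega
    · simp at hx

lemma Dop_sum (hs : ∀ x ∈ s, x ≠ 0) (hD : rk s ≤ 3*j) (hne : ¬(s = 0 ∧ j = 0)) :
    ((Dop j s).sum : ℤ) = (s.sum : ℤ) + (3*j - 1) := by
  have hd := dge hs hD hne
  have hA2 : ∀ x ∈ s.filter (fun x => 2 ≤ x), 1 ≤ x := by
    intro x hx; rw [Multiset.mem_filter] at hx; omega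
  have h1 := sum_map_pred' hA2
  have h2 := split_card s
  have h3 := split_sum s
  have hones : (s.filter (fun x => ¬ 2 ≤ x)).sum
      = Multiset.card (s.filter (fun x => ¬ 2 ≤ x)) := by
    conv_lhs => rw [ones_eq_replicate hs]
    rw [Multiset.sum_replicate, smul_eq_mul, mul_one]
  rcases eq_or_lt_of_le hd with hd0 | hdpos
  · have hDop : Dop j s = 0 := by
      rw [Dop, d0_A_empty hs hD hd0.symm, if_neg (by omega)]
      simp
    have hA0 := d0_A_empty hs hD hd0.symm
    have h4 : (s.filter (fun x => 2 ≤ x)).sum = 0 := by rw [hA0]; rfl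
    have h5 : Multiset.card (s.filter (fun x => 2 ≤ x)) = 0 := by rw [hA0]; rfl
    rw [hDop]
    simp only [Multiset.sum_zero, Nat.cast_zero]
    omega
  · have hDop : Dop j s = (s.filter (fun x => 2 ≤ x)).map (fun x => x - 1)
        + {((Multiset.card s : ℤ) + 3*j - 1).toNat} := by
      rw [Dop, if_pos hdpos]
    have ht : (((Multiset.card s : ℤ) + 3*j - 1).toNat : ℤ)
        = (Multiset.card s : ℤ) + 3*j - 1 := Int.toNat_of_nonneg hd
    rw [hDop, Multiset.sum_add, Multiset.sum_singleton]
    omega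

lemma Dop_sup (hs : ∀ x ∈ s, x ≠ 0) (hD : rk s ≤ 3*j)
    (hdpos : 0 < (Multiset.card s : ℤ) + 3*j - 1) :
    (Dop j s).sup = ((Multiset.card s : ℤ) + 3*j - 1).toNat := by
  have ht : (((Multiset.card s : ℤ) + 3*j - 1).toNat : ℤ)
      = (Multiset.card s : ℤ) + 3*j - 1 := Int.toNat_of_nonneg (le_of_lt hdpos)
  have hDop : Dop j s = (s.filter (fun x => 2 ≤ x)).map (fun x => x - 1)
      + {((Multiset.card s : ℤ) + 3*j - 1).toNat} := by
    rw [Dop, if_pos hdpos]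
  rw [hDop]
  apply le_antisymm
  · rw [Multiset.sup_le]
    intro b hb
    rw [Multiset.mem_add] at hb
    rcases hb with hb | hb
    · rw [Multiset.mem_map] at hb
      obtain ⟨a, ha, rfl⟩ := hb
      rw [Multiset.mem_filter] at ha
      have h1 : a ≤ s.sup := Multiset.le_sup ha.1
      rw [rk] at hD
      omega
    · rw [Multiset.mem_singleton] at hb
      omega
  · exact Multiset.le_sup (Multiset.mem_add.2 (Or.inr (Multiset.mem_singleton_self _)))

lemma Dop_rk (hs : ∀ x ∈ s, x ≠ 0) (hD : rk s ≤ 3*j) (hne : ¬(s = 0 ∧ j = 0)) :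
    3*(j-1) < rk (Dop j s) := by
  have hd := dge hs hD hne
  have h2 := split_card s
  rcases eq_or_lt_of_le hd with hd0 | hdpos
  · have hDop : Dop j s = 0 := by
      rw [Dop, d0_A_empty hs hD hd0.symm, if_neg (by omega)]
      simp
    rw [hDop, rk_zero]
    omega
  · have ht : (((Multiset.card s : ℤ) + 3*j - 1).toNat : ℤ)
        = (Multiset.card s : ℤ) + 3*j - 1 := Int.toNat_of_nonneg hd
    have hsup := Dop_sup hs hD hdpos
    have hcard : Multiset.card (Dop j s)
        = Multiset.card (s.filter (fun x => 2 ≤ x)) + 1 := by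
      rw [Dop, if_pos hdpos, Multiset.card_add, Multiset.card_map, Multiset.card_singleton]
    rw [rk, hsup, hcard]
    push_cast
    omega

lemma Uop_Dop (hs : ∀ x ∈ s, x ≠ 0) (hD : rk s ≤ 3*j) (hne : ¬(s = 0 ∧ j = 0)) :
    Uop (j-1) (Dop j s) = s := by
  have hd := dge hs hD hne
  have h2 := split_card s
  rcases eq_or_lt_of_le hd with hd0 | hdpos
  · have hA0 := d0_A_empty hs hD hd0.symm
    have hDop : Dop j s = 0 := by
      rw [Dop, hA0, if_neg (by omega)]
      simp
    rw [hDop, Uop, if_pos rfl]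
    have hcard : (Multiset.card s : ℤ) = 1 - 3*j := by omega
    have : (-3*(j-1)-2).toNat = Multiset.card s := by omega
    rw [this]
    exact (d0_ones hs hD hd0.symm).symm
  · have ht : (((Multiset.card s : ℤ) + 3*j - 1).toNat : ℤ)
        = (Multiset.card s : ℤ) + 3*j - 1 := Int.toNat_of_nonneg hd
    set d' := ((Multiset.card s : ℤ) + 3*j - 1).toNat with hd'
    have hDop : Dop j s = (s.filter (fun x => 2 ≤ x)).map (fun x => x - 1) + {d'} := by
      rw [Dop, if_pos hdpos]
    have hsup := Dop_sup hs hD hdpos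
    have hDne : Dop j s ≠ 0 := by
      intro hc
      have : d' ∈ Dop j s := by
        rw [hDop]; exact Multiset.mem_add.2 (Or.inr (Multiset.mem_singleton_self _))
      rw [hc] at this
      simp at this
    have hcard : Multiset.card (Dop j s)
        = Multiset.card (s.filter (fun x => 2 ≤ x)) + 1 := by
      rw [hDop, Multiset.card_add, Multiset.card_map, Multiset.card_singleton]
    have herase : (Dop j s).erase (Dop j s).sup
        = (s.filter (fun x => 2 ≤ x)).map (fun x => x - 1) := by
      rw [hsup, hDop, add_comm, Multiset.singleton_add, Multiset.erase_cons_head]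
    have hmapid : (((s.filter (fun x => 2 ≤ x)).map (fun x => x - 1)).map (fun x => x + 1))
        = s.filter (fun x => 2 ≤ x) := by
      rw [Multiset.map_map]
      have : ∀ x ∈ s.filter (fun x => 2 ≤ x),
          ((fun x => x + 1) ∘ (fun x => x - 1)) x = id x := by
        intro x hx
        rw [Multiset.mem_filter] at hx
        simp only [Function.comp_apply, id]
        omega
      rw [Multiset.map_congr rfl this, Multiset.map_id]
    have hrepl : ((((Dop j s).sup : ℤ) - Multiset.card (Dop j s) - 3*(j-1) - 1).toNat)
        = Multiset.card (s.filter (fun x => ¬ 2 ≤ x)) := by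
      rw [hsup, hcard]
      omega
    rw [Uop, if_neg hDne, herase, hmapid, hrepl, ← ones_eq_replicate hs,
      Multiset.filter_add_not]

end Dside


-- ===== new material =====
noncomputable def phi (x : ℤ × Multiset ℕ) : ℤ × Multiset ℕ :=
  if 3 * x.1 < rk x.2 then (x.1 + 1, Uop x.1 x.2) else (x.1 - 1, Dop x.1 x.2)

lemma phi_eq (j : ℤ) (s : Multiset ℕ) :
    phi (j, s) = if 3 * j < rk s then (j + 1, Uop j s) else (j - 1, Dop j s) := rfl

lemma phi_phi {j : ℤ} {s : Multiset ℕ} (hs : ∀ x ∈ s, x ≠ 0) (hne : ¬(s = 0 ∧ j = 0)) :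
    phi (phi (j, s)) = (j, s) := by
  by_cases h : 3 * j < rk s
  · have h1 : phi (j, s) = (j + 1, Uop j s) := by rw [phi_eq, if_pos h]
    rw [h1, phi_eq, if_neg (not_lt.2 (Uop_rk hs h)), Dop_Uop hs h]
    congr 1
    ring
  · push_neg at h
    have h1 : phi (j, s) = (j - 1, Dop j s) := by rw [phi_eq, if_neg (not_lt.2 h)]
    rw [h1, phi_eq, if_pos (Dop_rk hs h hne), Uop_Dop hs h hne]
    congr 1
    ring

/-- the window set -/
noncomputable def Om (k : ℕ) (n : ℤ) : Finset (ℤ × Multiset ℕ) :=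
  (Finset.Icc (-(k:ℤ)) ((k:ℤ)-1)).biUnion
    (fun j => (parts (n - pent j)).image (fun s => (j, s)))

lemma mem_Om {k : ℕ} {n : ℤ} {x : ℤ × Multiset ℕ} :
    x ∈ Om k n ↔ (-(k:ℤ) ≤ x.1 ∧ x.1 ≤ (k:ℤ)-1) ∧ x.2 ∈ parts (n - pent x.1) := by
  rw [Om, Finset.mem_biUnion]
  constructor
  · rintro ⟨j, hj, hx⟩
    rw [Finset.mem_image] at hx
    obtain ⟨s, hs, rfl⟩ := hx
    rw [Finset.mem_Icc] at hj
    exact ⟨hj, hs⟩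
  · rintro ⟨hj, hx⟩
    exact ⟨x.1, Finset.mem_Icc.2 hj, Finset.mem_image.2 ⟨x.2, hx, rfl⟩⟩

lemma card_filter_Om (k : ℕ) (n : ℤ) (p : ℤ → Prop) [DecidablePred p] :
    (((Om k n).filter (fun x => p x.1)).card : ℤ)
      = ∑ j ∈ Finset.Icc (-(k:ℤ)) ((k:ℤ)-1),
          (if p j then ((parts (n - pent j)).card : ℤ) else 0) := by
  rw [Om, Finset.filter_biUnion, Finset.card_biUnion]
  · push_cast
    apply Finset.sum_congr rfl
    intro j _
    by_cases hp : p j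
    · rw [if_pos hp]
      have : ((parts (n - pent j)).image (fun s => (j, s))).filter (fun x => p x.1)
          = (parts (n - pent j)).image (fun s => (j, s)) := by
        rw [Finset.filter_eq_self]
        intro x hx
        rw [Finset.mem_image] at hx
        obtain ⟨s, _, rfl⟩ := hx
        exact hp
      rw [this, Finset.card_image_of_injective]
      intro a b hab
      simpa using hab
    · rw [if_neg hp]
      have : ((parts (n - pent j)).image (fun s => (j, s))).filter (fun x => p x.1)
          = ∅ := by
        rw [Finset.filter_eq_empty_iff]
        intro x hx
        rw [Finset.mem_image] at hx
        obtain ⟨s, _, rfl⟩ := hx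
        exact hp
      rw [this]
      simp
  · intro a _ b _ hab
    rw [Function.onFun, Finset.disjoint_left]
    intro x hx hx'
    rw [Finset.mem_filter, Finset.mem_image] at hx hx'
    obtain ⟨⟨s, _, rfl⟩, _⟩ := hx
    obtain ⟨⟨t, _, ht⟩, _⟩ := hx'
    exact hab (congrArg Prod.fst ht).symm

lemma sum_Icc_split (f : ℤ → ℤ) (k : ℕ) :
    ∑ j ∈ Finset.Icc (-(k:ℤ)) ((k:ℤ)-1), f j
      = ∑ i ∈ Finset.range k, (f i + f (-1-(i:ℤ))) := by
  induction k with
  | zero => simp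
  | succ k ih =>
    have hins : Finset.Icc (-((k:ℤ)+1)) (((k:ℤ)+1)-1)
        = insert (-((k:ℤ)+1)) (insert (k:ℤ) (Finset.Icc (-(k:ℤ)) ((k:ℤ)-1))) := by
      ext x
      simp only [Finset.mem_Icc, Finset.mem_insert]
      omega
    push_cast
    rw [hins, Finset.sum_insert, Finset.sum_insert, ih, Finset.sum_range_succ]
    · push_cast
      have : -((k:ℤ)+1) = -1-(k:ℤ) := by ring
      rw [this]
      ring
    · simp only [Finset.mem_Icc]; omega
    · simp only [Finset.mem_insert, Finset.mem_Icc]; omega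


-- ======== new material ========

lemma sign_combine (k' i : ℕ) (a b : ℤ) :
    (if Odd ((i:ℤ) + ((k':ℤ)+1)) then (1:ℤ) else -1) * a
      + (if Odd (-1-(i:ℤ) + ((k':ℤ)+1)) then (1:ℤ) else -1) * b
      = (-1)^(k'+i) * (a - b) := by
  rcases Nat.even_or_odd (k'+i) with h | h
  · have hp : ((-1:ℤ))^(k'+i) = 1 := h.neg_one_pow
    obtain ⟨m, hm⟩ := h
    have h1 : Odd ((i:ℤ) + ((k':ℤ)+1)) := by rw [Int.odd_iff]; omega
    have h2 : ¬ Odd (-1-(i:ℤ) + ((k':ℤ)+1)) := by rw [Int.odd_iff]; omega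
    rw [if_pos h1, if_neg h2, hp]; ring
  · have hp : ((-1:ℤ))^(k'+i) = -1 := h.neg_one_pow
    obtain ⟨m, hm⟩ := h
    have h1 : ¬ Odd ((i:ℤ) + ((k':ℤ)+1)) := by rw [Int.odd_iff]; omega
    have h2 : Odd (-1-(i:ℤ) + ((k':ℤ)+1)) := by rw [Int.odd_iff]; omega
    rw [if_neg h1, if_pos h2, hp]; ring

section inj
variable {k : ℕ} {n : ℤ}

lemma psi_rk {s : Multiset ℕ} (hk : 0 < k) (hs : ∀ x ∈ s, x ≠ 0)
    (hr : rk s ≤ 3 * (-(k:ℤ))) :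
    3 * ((k:ℤ) - 1) < rk ((2*k-1 : ℕ) ::ₘ conj s) := by
  have h1 : (conj s).sup = Multiset.card s := sup_conj hs
  have h2 : Multiset.card (conj s) = s.sup := card_conj s
  rw [rk] at hr
  have hkk : (2*k-1 : ℕ) ≤ Multiset.card s := by omega
  have hsup : ((2*k-1 : ℕ) ::ₘ conj s).sup = Multiset.card s := by
    rw [Multiset.sup_cons, h1, max_eq_right hkk]
  have hcard : Multiset.card ((2*k-1 : ℕ) ::ₘ conj s) = s.sup + 1 := by
    rw [Multiset.card_cons, h2]
  rw [rk, hsup, hcard]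
  omega

lemma psi_parts {s : Multiset ℕ} (hk : 0 < k) (hn : 0 < n)
    (hmem : s ∈ parts (n - pent (-(k:ℤ)))) :
    ((2*k-1 : ℕ) ::ₘ conj s) ∈ parts (n - pent ((k:ℤ)-1)) := by
  rw [mem_parts] at hmem ⊢
  obtain ⟨hsum, hpos⟩ := hmem
  constructor
  · rw [Multiset.sum_cons]
    have h1 : (conj s).sum = s.sum := sum_conj
    have h2 := pent_neg_sub (k:ℤ)
    omega
  · intro x hx
    rw [Multiset.mem_cons] at hx
    rcases hx with rfl | hx
    · omega
    · exact conj_pos hpos x hx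

lemma hne_of_mem {j : ℤ} {s : Multiset ℕ} (hn : 0 < n)
    (hmem : s ∈ parts (n - pent j)) : ¬(s = 0 ∧ j = 0) := by
  rintro ⟨rfl, rfl⟩
  rw [mem_parts] at hmem
  have := hmem.1
  simp [pent] at this
  omega

lemma neg_card_le (hk : 0 < k) (hn : 0 < n) :
    ((Om k n).filter (fun x => Even (x.1 + (k:ℤ)))).card
      ≤ ((Om k n).filter (fun x => Odd (x.1 + (k:ℤ)))).card := by
  classical
  set F : ℤ × Multiset ℕ → ℤ × Multiset ℕ :=
    fun x => if x.1 = -(k:ℤ) ∧ rk x.2 ≤ 3 * x.1 then ((k:ℤ)-1, (2*k-1 : ℕ) ::ₘ conj x.2)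
      else phi x with hF
  apply Finset.card_le_card_of_injOn F
  · -- maps to
    rintro ⟨j, s⟩ hx
    simp only [Finset.mem_coe, Finset.mem_filter, mem_Om] at hx
    obtain ⟨⟨⟨hj1, hj2⟩, hmem⟩, hEv⟩ := hx
    have hmem' := hmem
    rw [mem_parts] at hmem'
    obtain ⟨hsum, hpos⟩ := hmem'
    have hne : ¬(s = 0 ∧ j = 0) := hne_of_mem hn hmem
    by_cases hpsi : j = -(k:ℤ) ∧ rk s ≤ 3 * j
    · have hFx : F (j, s) = ((k:ℤ)-1, (2*k-1 : ℕ) ::ₘ conj s) := by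
        rw [hF]; exact if_pos hpsi
      rw [hFx]
      simp only [Finset.mem_coe, Finset.mem_filter, mem_Om]
      refine ⟨⟨⟨by omega, by omega⟩, ?_⟩, ?_⟩
      · exact psi_parts hk hn (by rw [← hpsi.1]; exact hmem)
      · show Odd ((k:ℤ) - 1 + (k:ℤ))
        rw [Int.odd_iff]; omega
    · have hFx : F (j, s) = phi (j, s) := by rw [hF]; exact if_neg hpsi
      rw [hFx]
      rw [Int.even_iff] at hEv
      by_cases hU : 3 * j < rk s
      · have hphi : phi (j, s) = (j + 1, Uop j s) := by rw [phi_eq, if_pos hU]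
        rw [hphi]
        simp only [Finset.mem_coe, Finset.mem_filter, mem_Om]
        have hjne : j ≠ (k:ℤ) - 1 := by intro hj; omega
        refine ⟨⟨⟨by omega, by omega⟩, ?_⟩, ?_⟩
        · rw [mem_parts]
          refine ⟨?_, Uop_pos hpos⟩
          rw [Uop_sum hpos hU, hsum, pent_succ]
          ring
        · show Odd (j + 1 + (k:ℤ))
          rw [Int.odd_iff]; omega
      · push_neg at hU
        have hphi : phi (j, s) = (j - 1, Dop j s) := by rw [phi_eq, if_neg (not_lt.2 hU)]
        rw [hphi]
        simp only [Finset.mem_coe, Finset.mem_filter, mem_Om]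
        have hjne : j ≠ -(k:ℤ) := fun hj => hpsi ⟨hj, hU⟩
        refine ⟨⟨⟨by omega, by omega⟩, ?_⟩, ?_⟩
        · rw [mem_parts]
          refine ⟨?_, Dop_pos hpos⟩
          rw [Dop_sum hpos hU hne, hsum, pent_pred]
          ring
        · show Odd (j - 1 + (k:ℤ))
          rw [Int.odd_iff]; omega
  · -- injective
    rintro ⟨j₁, s₁⟩ hx₁ ⟨j₂, s₂⟩ hx₂ heq
    rw [Finset.mem_coe, Finset.mem_filter, mem_Om] at hx₁ hx₂
    obtain ⟨⟨⟨hj1₁, hj2₁⟩, hmem₁⟩, hEv₁⟩ := hx₁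
    obtain ⟨⟨⟨hj1₂, hj2₂⟩, hmem₂⟩, hEv₂⟩ := hx₂
    have hpos₁ := (mem_parts.1 hmem₁).2
    have hpos₂ := (mem_parts.1 hmem₂).2
    have hne₁ : ¬(s₁ = 0 ∧ j₁ = 0) := hne_of_mem hn hmem₁
    have hne₂ : ¬(s₂ = 0 ∧ j₂ = 0) := hne_of_mem hn hmem₂
    by_cases c₁ : j₁ = -(k:ℤ) ∧ rk s₁ ≤ 3 * j₁ <;>
      by_cases c₂ : j₂ = -(k:ℤ) ∧ rk s₂ ≤ 3 * j₂
    · -- both psi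
      have h₁ : F (j₁, s₁) = ((k:ℤ)-1, (2*k-1 : ℕ) ::ₘ conj s₁) := by rw [hF]; exact if_pos c₁
      have h₂ : F (j₂, s₂) = ((k:ℤ)-1, (2*k-1 : ℕ) ::ₘ conj s₂) := by rw [hF]; exact if_pos c₂
      rw [h₁, h₂] at heq
      have h5 : (2*k-1 : ℕ) ::ₘ conj s₁ = (2*k-1 : ℕ) ::ₘ conj s₂ := congrArg Prod.snd heq
      have hs12 : s₁ = s₂ := conj_inj hpos₁ hpos₂ ((Multiset.cons_inj_right _).1 h5)
      rw [hs12, c₁.1, c₂.1]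
    · -- x₁ psi, x₂ phi : contradiction
      exfalso
      have h₁ : F (j₁, s₁) = ((k:ℤ)-1, (2*k-1 : ℕ) ::ₘ conj s₁) := by rw [hF]; exact if_pos c₁
      have h₂ : F (j₂, s₂) = phi (j₂, s₂) := by rw [hF]; exact if_neg c₂
      have hrk : 3 * ((k:ℤ) - 1) < rk ((2*k-1 : ℕ) ::ₘ conj s₁) := by
        apply psi_rk hk hpos₁
        rw [← c₁.1]; exact c₁.2
      have hphiF : phi (((k:ℤ)-1), (2*k-1 : ℕ) ::ₘ conj s₁)
          = ((k:ℤ)-1+1, Uop ((k:ℤ)-1) ((2*k-1 : ℕ) ::ₘ conj s₁)) := by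
        rw [phi_eq, if_pos hrk]
      have hinv : phi (phi (j₂, s₂)) = (j₂, s₂) := phi_phi hpos₂ hne₂
      rw [← h₂, ← heq, h₁, hphiF] at hinv
      have hco : (k:ℤ) - 1 + 1 = j₂ := congrArg Prod.fst hinv
      omega
    · -- x₁ phi, x₂ psi : symmetric
      exfalso
      have h₂ : F (j₂, s₂) = ((k:ℤ)-1, (2*k-1 : ℕ) ::ₘ conj s₂) := by rw [hF]; exact if_pos c₂
      have h₁ : F (j₁, s₁) = phi (j₁, s₁) := by rw [hF]; exact if_neg c₁
      have hrk : 3 * ((k:ℤ) - 1) < rk ((2*k-1 : ℕ) ::ₘ conj s₂) := by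
        apply psi_rk hk hpos₂
        rw [← c₂.1]; exact c₂.2
      have hphiF : phi (((k:ℤ)-1), (2*k-1 : ℕ) ::ₘ conj s₂)
          = ((k:ℤ)-1+1, Uop ((k:ℤ)-1) ((2*k-1 : ℕ) ::ₘ conj s₂)) := by
        rw [phi_eq, if_pos hrk]
      have hinv : phi (phi (j₁, s₁)) = (j₁, s₁) := phi_phi hpos₁ hne₁
      rw [← h₁, heq, h₂, hphiF] at hinv
      have hco : (k:ℤ) - 1 + 1 = j₁ := congrArg Prod.fst hinv
      omega
    · -- both phi
      have h₁ : F (j₁, s₁) = phi (j₁, s₁) := by rw [hF]; exact if_neg c₁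
      have h₂ : F (j₂, s₂) = phi (j₂, s₂) := by rw [hF]; exact if_neg c₂
      have hinv₁ : phi (phi (j₁, s₁)) = (j₁, s₁) := phi_phi hpos₁ hne₁
      have hinv₂ : phi (phi (j₂, s₂)) = (j₂, s₂) := phi_phi hpos₂ hne₂
      rw [← hinv₁, ← hinv₂]
      rw [← h₁, ← h₂, heq]

end inj
end AMtmp

open AMtmp

theorem andrewsMercaM_nonneg (n : ℤ) (k : ℕ) (hn : 0 < n) (hk : 0 < k) :
    0 ≤ andrewsMercaM k n := by
  classical
  obtain ⟨k', rfl⟩ : ∃ k', k = k' + 1 := ⟨k - 1, by omega⟩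
  set k := k' + 1 with hkdef
  have key : andrewsMercaM k n
      = (((Om k n).filter (fun x => Odd (x.1 + (k:ℤ)))).card : ℤ)
        - (((Om k n).filter (fun x => Even (x.1 + (k:ℤ)))).card : ℤ) := by
    have h1 : (((Om k n).filter (fun x => Odd (x.1 + (k:ℤ)))).card : ℤ)
        = ∑ j ∈ Finset.Icc (-(k:ℤ)) ((k:ℤ)-1),
            (if Odd (j + (k:ℤ)) then ((parts (n - pent j)).card : ℤ) else 0) :=
      card_filter_Om k n (fun j => Odd (j + (k:ℤ)))
    have h2 : (((Om k n).filter (fun x => Even (x.1 + (k:ℤ)))).card : ℤ)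
        = ∑ j ∈ Finset.Icc (-(k:ℤ)) ((k:ℤ)-1),
            (if Even (j + (k:ℤ)) then ((parts (n - pent j)).card : ℤ) else 0) :=
      card_filter_Om k n (fun j => Even (j + (k:ℤ)))
    rw [h1, h2, ← Finset.sum_sub_distrib]
    have step1 : ∀ j ∈ Finset.Icc (-(k:ℤ)) ((k:ℤ)-1),
        ((if Odd (j + (k:ℤ)) then ((parts (n - pent j)).card : ℤ) else 0)
          - (if Even (j + (k:ℤ)) then ((parts (n - pent j)).card : ℤ) else 0))
        = (if Odd (j + (k:ℤ)) then (1:ℤ) else -1) * ((parts (n - pent j)).card : ℤ) := by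
      intro j _
      by_cases h : Odd (j + (k:ℤ))
      · rw [if_pos h, if_pos h, if_neg (fun he => (Int.not_odd_iff_even.2 he) h)]
        ring
      · rw [if_neg h, if_neg h, if_pos (Int.not_odd_iff_even.1 h)]
        ring
    rw [Finset.sum_congr rfl step1]
    rw [sum_Icc_split (fun j => (if Odd (j + (k:ℤ)) then (1:ℤ) else -1)
        * ((parts (n - pent j)).card : ℤ)) k]
    have step2 : ∀ i ∈ Finset.range k,
        ((if Odd ((i:ℤ) + (k:ℤ)) then (1:ℤ) else -1) * ((parts (n - pent (i:ℤ))).card : ℤ)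
          + (if Odd ((-1-(i:ℤ)) + (k:ℤ)) then (1:ℤ) else -1)
              * ((parts (n - pent (-1-(i:ℤ)))).card : ℤ))
        = (-1:ℤ)^(k'+i) * (pZ (n - (i : ℤ) * (3 * i + 1) / 2)
            - pZ (n - (i : ℤ) * (3 * i + 5) / 2 - 1)) := by
      intro i _
      have e1 : ((parts (n - pent (i:ℤ))).card : ℤ) = pZ (n - (i : ℤ) * (3 * i + 1) / 2) := by
        rw [card_parts]; rfl
      have e2 : ((parts (n - pent (-1-(i:ℤ)))).card : ℤ)
          = pZ (n - (i : ℤ) * (3 * i + 5) / 2 - 1) := by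
        rw [card_parts, pent_neg_succ]
        congr 1
        ring
      have hkc : ((k:ℕ) : ℤ) = (k' : ℤ) + 1 := by rw [hkdef]; push_cast; ring
      rw [e1, e2, hkc]
      exact sign_combine k' i _ _
    rw [Finset.sum_congr rfl step2]
    rw [andrewsMercaM]
    rw [show k - 1 = k' from rfl, Finset.mul_sum]
    apply Finset.sum_congr rfl
    intro i _
    rw [pow_add]; ring
  have hle := neg_card_le (k := k) (n := n) (by omega) hn
  omega
end
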